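/- (Z_2^2-supersymmetry group law) On quadruples (t, z, θ¹, θ²) with entries in a Z_2^2-commutative algebra A, of degrees (0,0), (1,1), (0,1), (1,0) respectively, the operation (t,z,θ¹,θ²)·(t',z',θ'¹,θ'²) := (t + t' + θ¹θ'¹ + θ²θ'², z + z' + θ¹θ'² − θ²θ'¹, θ¹+θ'¹, θ²+θ'²) is associative, has identity (0,0,0,0), and every element has inverse (−t, −z, −θ¹, −θ²); hence it defines a group structure. -/
import Mathlib


/-- The standard pairing on `ℤ₂²`. -/
def pair2 (γ δ : ZMod 2 × ZMod 2) : ZMod 2 := γ.1 * δ.1 + γ.2 * δ.2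

/-- The `ℤ₂²`-supersymmetry product on quadruples `(t, z, θ¹, θ²)`. -/
def susyOp {A : Type*} [Ring A] (q q' : A × A × A × A) : A × A × A × A :=
  (q.1 + q'.1 + q.2.2.1 * q'.2.2.1 + q.2.2.2 * q'.2.2.2,
   q.2.1 + q'.2.1 + q.2.2.1 * q'.2.2.2 - q.2.2.2 * q'.2.2.1,
   q.2.2.1 + q'.2.2.1,
   q.2.2.2 + q'.2.2.2)

/-- The candidate inverse `(−t, −z, −θ¹, −θ²)`. -/
def susyInv {A : Type*} [Ring A] (q : A × A × A × A) : A × A × A × A :=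
  (-q.1, -q.2.1, -q.2.2.1, -q.2.2.2)

/-- The predicate that the quadruple `(t, z, θ¹, θ²)` has components of `ℤ₂²`-degrees
`(0,0)`, `(1,1)`, `(0,1)`, `(1,0)` respectively. -/
def susyDeg {A : Type*} [Ring A] [Algebra ℝ A]
    (𝒜 : ZMod 2 × ZMod 2 → Submodule ℝ A) (q : A × A × A × A) : Prop :=
  q.1 ∈ 𝒜 (0, 0) ∧ q.2.1 ∈ 𝒜 (1, 1) ∧ q.2.2.1 ∈ 𝒜 (0, 1) ∧ q.2.2.2 ∈ 𝒜 (1, 0)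

/-- `ℤ₂²`-supersymmetry group law: on quadruples `(t, z, θ¹, θ²)` with
entries in a `ℤ₂²`-commutative `ℝ`-algebra `A` of degrees `(0,0)`, `(1,1)`, `(0,1)`,
`(1,0)`, the operation
`(t,z,θ¹,θ²)·(t',z',θ'¹,θ'²) = (t+t'+θ¹θ'¹+θ²θ'², z+z'+θ¹θ'²−θ²θ'¹, θ¹+θ'¹, θ²+θ'²)`
is associative, has identity `(0,0,0,0)`, every element has inverse `(−t,−z,−θ¹,−θ²)`,
and the set of such quadruples is closed under the operation and inverses; hence it
defines a group structure. -/
theorem susy_group_law {A : Type*} [Ring A] [Algebra ℝ A]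
    (𝒜 : ZMod 2 × ZMod 2 → Submodule ℝ A)
    (hmul : ∀ γ δ (a b : A), a ∈ 𝒜 γ → b ∈ 𝒜 δ → a * b ∈ 𝒜 (γ + δ))
    (hsign : ∀ γ δ (a b : A), a ∈ 𝒜 γ → b ∈ 𝒜 δ →
      a * b = ((-1 : ℝ) ^ (pair2 γ δ).val) • (b * a)) :
    (∀ q q' q'' : A × A × A × A, susyDeg 𝒜 q → susyDeg 𝒜 q' → susyDeg 𝒜 q'' →
      susyOp (susyOp q q') q'' = susyOp q (susyOp q' q'')) ∧
    (∀ q : A × A × A × A, susyDeg 𝒜 q →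
      susyOp q (0, 0, 0, 0) = q ∧ susyOp (0, 0, 0, 0) q = q) ∧
    (∀ q : A × A × A × A, susyDeg 𝒜 q →
      susyOp q (susyInv q) = (0, 0, 0, 0) ∧ susyOp (susyInv q) q = (0, 0, 0, 0)) ∧
    (∀ q q' : A × A × A × A, susyDeg 𝒜 q → susyDeg 𝒜 q' →
      susyDeg 𝒜 (susyOp q q') ∧ susyDeg 𝒜 (susyInv q)) := by
  have hsq : ∀ γ (a : A), a ∈ 𝒜 γ → (pair2 γ γ).val = 1 → a * a = 0 := by
    intro γ a ha h
    have := hsign γ γ a a ha ha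
    rw [h] at this
    simp only [pow_one, neg_smul, one_smul] at this
    have h2 : (2 : ℝ) • (a * a) = 0 := by
      rw [two_smul]; nth_rewrite 2 [this]; simp
    rcases smul_eq_zero.mp h2 with h | h
    · norm_num at h
    · exact h
  have hsq1 : ∀ a : A, a ∈ 𝒜 (0, 1) → a * a = 0 := fun a ha =>
    hsq (0,1) a ha (by decide)
  have hsq2 : ∀ a : A, a ∈ 𝒜 (1, 0) → a * a = 0 := fun a ha =>
    hsq (1,0) a ha (by decide)
  have hcomm : ∀ (a b : A), a ∈ 𝒜 (0,1) → b ∈ 𝒜 (1,0) → a * b = b * a := by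
    intro a b ha hb
    have := hsign (0,1) (1,0) a b ha hb
    simpa [pair2] using this
  refine ⟨?_, ?_, ?_, ?_⟩
  · intro q q' q'' _ _ _
    simp only [susyOp, Prod.mk.injEq]
    refine ⟨by (first | noncomm_ring | abel | simp), by (first | noncomm_ring | abel | simp), by (first | noncomm_ring | abel | simp), by (first | noncomm_ring | abel | simp)⟩
  · intro q _
    simp [susyOp]
  · rintro ⟨t, z, θ1, θ2⟩ ⟨_, _, h1, h2⟩
    simp only [susyOp, susyInv, Prod.mk.injEq]
    constructor
    · refine ⟨?_, ?_, by (first | noncomm_ring | abel | simp), by (first | noncomm_ring | abel | simp)⟩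
      · have := hsq1 θ1 h1; have := hsq2 θ2 h2
        simp only [mul_neg]; rw [‹θ1*θ1=0›, ‹θ2*θ2=0›]; (first | noncomm_ring | abel | simp)
      · have := hcomm θ1 θ2 h1 h2
        simp only [mul_neg, neg_mul]; rw [this]; (first | noncomm_ring | abel | simp)
    · refine ⟨?_, ?_, by (first | noncomm_ring | abel | simp), by (first | noncomm_ring | abel | simp)⟩
      · have := hsq1 θ1 h1; have := hsq2 θ2 h2
        simp only [neg_mul]; rw [‹θ1*θ1=0›, ‹θ2*θ2=0›]; (first | noncomm_ring | abel | simp)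
      · have := hcomm θ1 θ2 h1 h2
        simp only [neg_mul]; rw [this]; (first | noncomm_ring | abel | simp)
  · rintro ⟨t, z, θ1, θ2⟩ ⟨t', z', θ1', θ2'⟩ ⟨ht, hz, h1, h2⟩ ⟨ht', hz', h1', h2'⟩
    constructor
    · refine ⟨?_, ?_, ?_, ?_⟩
      · have m1 := hmul (0,1) (0,1) θ1 θ1' h1 h1'
        have m2 := hmul (1,0) (1,0) θ2 θ2' h2 h2'
        norm_num at m1 m2
        exact add_mem (add_mem (add_mem ht ht') m1) m2
      · have m1 := hmul (0,1) (1,0) θ1 θ2' h1 h2'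
        have m2 := hmul (1,0) (0,1) θ2 θ1' h2 h1'
        exact sub_mem (add_mem (add_mem hz hz') m1) m2
      · exact add_mem h1 h1'
      · exact add_mem h2 h2'
    · exact ⟨neg_mem ht, neg_mem hz, neg_mem h1, neg_mem h2⟩
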